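/- Let X be a complete metric space, Y a metric space, Φ : X ⇉ Y with closed graph, φ : X → ℝ ∪ {+∞} lower semicontinuous, ȳ ∈ Y, x̄ ∈ dom φ ∩ Φ⁻¹(ȳ), δ > 0, and U ⊃ B_δ(x̄). Assume on U the function φ is bounded from below and lower semicontinuous relative to Φ at ȳ, and that x̄ is an ε-minimal point of φ restricted to Φ⁻¹(ȳ) on U for some ε > 0. Then there is δ₀ ∈ (0, δ) such that for each δ' ∈ (δ₀, δ) and each η > 0, there exist points x̂ ∈ B_{δ'}(x̄), ŷ ∈ B_η(ȳ) with dist_{gph Φ}(x̂, ŷ) < η, and numbers γ > 0, γ₁ > 0 such that with φ_γ(x, y) := φ(x) + γ(d(y, ȳ) + dist_{gph Φ}(x, y)), one has φ_γ(x̂, ŷ) + γ₁ d(x̂, x̄)² ≤ φ(x̄) and the slope bound limsup_{(x,y)→(x̂,ŷ)} (φ_γ(x̂,ŷ) − φ_γ(x,y))/d((x,y),(x̂,ŷ)) < 2ε/δ. -/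

import Mathlib

open Filter Metric Set Topology

/-- The graph of a set-valued mapping `Φ : X ⇉ Y`. -/
def gphSet {X Y : Type*} (Φ : X → Set Y) : Set (X × Y) := {p : X × Y | p.2 ∈ Φ p.1}

/-- The auxiliary function `φ_γ(x, y) := φ(x) + γ (d(y, y₀) + dist_{gph Φ}(x, y))`. -/
noncomputable def phiGamma {X Y : Type*} [MetricSpace X] [MetricSpace Y]
    (φ : X → EReal) (Φ : X → Set Y) (y₀ : Y) (γ : ℝ) (x : X) (y : Y) : EReal :=
  φ x + (((γ * (dist y y₀ + Metric.infDist (x, y) (gphSet Φ))) : ℝ) : EReal)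

theorem ekeland_aux {α : Type*} [MetricSpace α] [CompleteSpace α]
    (f : α → ℝ) (hlsc : LowerSemicontinuous f) (c : ℝ) (hc : ∀ x, c ≤ f x)
    (x₀ : α) (lam : ℝ) (hlam : 0 < lam) :
    ∃ z : α, f z + lam * dist z x₀ ≤ f x₀ ∧ ∀ x, f z ≤ f x + lam * dist x z := by
  classical
  set S : α → Set α := fun x => {z | f z + lam * dist z x ≤ f x} with hS
  have hself : ∀ x, x ∈ S x := by intro x; simp [hS]
  have htrans : ∀ x y z, y ∈ S x → z ∈ S y → z ∈ S x := by
    intro x y z hy hz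
    have h1 : dist z x ≤ dist z y + dist y x := dist_triangle _ _ _
    simp only [hS, Set.mem_setOf_eq] at *
    nlinarith
  have hnext : ∀ (n : ℕ) (x : α), ∃ z, z ∈ S x ∧ ∀ w ∈ S x, f z ≤ f w + (1/2 : ℝ)^n := by
    intro n x
    have hne : (f '' S x).Nonempty := ⟨f x, x, hself x, rfl⟩
    have hbdd : BddBelow (f '' S x) := ⟨c, by rintro _ ⟨w, -, rfl⟩; exact hc w⟩
    obtain ⟨_, ⟨z, hzS, rfl⟩, hz⟩ := exists_lt_of_csInf_lt hne
      (lt_add_of_pos_right (sInf (f '' S x)) (by positivity : (0:ℝ) < (1/2:ℝ)^n))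
    exact ⟨z, hzS, fun w hw => hz.le.trans (add_le_add_left (csInf_le hbdd ⟨w, hw, rfl⟩) _)⟩
  let seq : ℕ → α := fun n => Nat.rec x₀ (fun n x => Classical.choose (hnext n x)) n
  have hseq0 : seq 0 = x₀ := rfl
  have hstep : ∀ n, seq (n+1) = Classical.choose (hnext n (seq n)) := fun n => rfl
  have hmemS : ∀ n, seq (n+1) ∈ S (seq n) := fun n => by
    rw [hstep]; exact (Classical.choose_spec (hnext n (seq n))).1
  have hminS : ∀ n, ∀ w ∈ S (seq n), f (seq (n+1)) ≤ f w + (1/2:ℝ)^n := fun n => by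
    rw [hstep]; exact (Classical.choose_spec (hnext n (seq n))).2
  have hchain : ∀ n m, n ≤ m → seq m ∈ S (seq n) := by
    intro n m hnm
    induction m, hnm using Nat.le_induction with
    | base => exact hself _
    | succ m hnm ih => exact htrans _ _ _ ih (hmemS m)
  have hchain' : ∀ n m, n ≤ m → f (seq m) + lam * dist (seq m) (seq n) ≤ f (seq n) :=
    fun n m h => hchain n m h
  have hanti : Antitone (fun n => f (seq n)) := by
    intro n m h
    have := hchain' n m h
    nlinarith [dist_nonneg (x := seq m) (y := seq n)]
  set L : ℝ := ⨅ n, f (seq n) with hLdef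
  have hbdd2 : BddBelow (Set.range fun n => f (seq n)) := ⟨c, by rintro _ ⟨n, rfl⟩; exact hc _⟩
  have hLle : ∀ n, L ≤ f (seq n) := fun n => ciInf_le hbdd2 n
  have hL : Tendsto (fun n => f (seq n)) atTop (𝓝 L) := tendsto_atTop_ciInf hanti hbdd2
  have hdist : ∀ n m, n ≤ m → dist (seq m) (seq n) ≤ (f (seq n) - f (seq m)) / lam := by
    intro n m h
    rw [le_div_iff₀ hlam]
    nlinarith [hchain' n m h]
  have hcauchy : CauchySeq seq := by
    apply cauchySeq_of_le_tendsto_0 (fun n => (f (seq n) - L) / lam)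
    · intro n m N hn hm
      rcases le_total n m with h | h
      · rw [dist_comm]
        refine (hdist n m h).trans ?_
        have h1 := hanti hn
        have h2 := hLle m
        gcongr
      · refine (hdist m n h).trans ?_
        have h1 := hanti hm
        have h2 := hLle n
        gcongr
    · have : Tendsto (fun n => (f (seq n) - L) / lam) atTop (𝓝 ((L - L)/lam)) :=
        (hL.sub_const L).div_const lam
      simpa using this
  obtain ⟨z, hz⟩ := cauchySeq_tendsto_of_complete hcauchy
  have hfz : f z ≤ L := by
    by_contra h
    push_neg at h
    obtain ⟨t, htL, htz⟩ := exists_between h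
    have h2 : ∀ᶠ n in atTop, t < f (seq n) := hz.eventually (hlsc z t htz)
    have h3 : ∀ᶠ n in atTop, f (seq n) < t := hL.eventually_lt_const htL
    obtain ⟨n, h4, h5⟩ := (h2.and h3).exists
    linarith
  have hzS : ∀ n, z ∈ S (seq n) := by
    intro n
    have ht : Tendsto (fun m => f (seq m) + lam * dist (seq m) (seq n)) atTop
        (𝓝 (L + lam * dist z (seq n))) :=
      hL.add ((hz.dist tendsto_const_nhds).const_mul lam)
    have hle : L + lam * dist z (seq n) ≤ f (seq n) :=
      le_of_tendsto ht (eventually_atTop.2 ⟨n, fun m hm => hchain' n m hm⟩)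
    show f z + lam * dist z (seq n) ≤ f (seq n)
    linarith
  refine ⟨z, by have := hzS 0; rwa [hseq0] at this, ?_⟩
  intro x
  by_contra h
  push_neg at h
  have hxSz : x ∈ S z := le_of_lt h
  have h1 : ∀ n : ℕ, f z ≤ f x + (1/2:ℝ)^n := by
    intro n
    have h2 := hminS n x (htrans _ _ _ (hzS n) hxSz)
    have h3 : f z + lam * dist z (seq (n+1)) ≤ f (seq (n+1)) := hzS (n+1)
    nlinarith [dist_nonneg (x := z) (y := seq (n+1))]
  have h4 : f z ≤ f x := by
    have ht : Tendsto (fun n : ℕ => f x + (1/2:ℝ)^n) atTop (𝓝 (f x + 0)) :=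
      tendsto_const_nhds.add (tendsto_pow_atTop_nhds_zero_of_lt_one (by norm_num) (by norm_num))
    rw [add_zero] at ht
    exact ge_of_tendsto' ht h1
  nlinarith [dist_nonneg (x := x) (y := z)]

set_option maxHeartbeats 2000000 in
/-- Theorem 4.1 / Remark 4.2 (primal local condition): necessary conditions for
`ε`-minimality of `x₀` for the problem `min { φ(x) | y₀ ∈ Φ(x) }` on `U`. -/
theorem eps_minimal_primal_local_condition
    {X Y : Type*} [MetricSpace X] [CompleteSpace X] [MetricSpace Y]
    (Φ : X → Set Y) (hΦcl : IsClosed (gphSet Φ))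
    (φ : X → EReal) (hlsc : LowerSemicontinuous φ) (hbot : ∀ x, φ x ≠ ⊥)
    (y₀ : Y) (x₀ : X) (hdom : φ x₀ ≠ ⊤) (hfeas : y₀ ∈ Φ x₀)
    (U : Set X) (ε δ : ℝ) (hε : 0 < ε) (hδ : 0 < δ)
    (hball : Metric.ball x₀ δ ⊆ U)
    -- φ is bounded from below on U
    (hbdd : ∃ c : ℝ, ∀ x ∈ U, (c : EReal) ≤ φ x)
    -- φ is lower semicontinuous on U relative to Φ at y₀ (sequential form)
    (hrel : ∀ (x : ℕ → X) (y : ℕ → Y) (ρ : ℝ), 0 < ρ →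
      (∀ k, Metric.ball (x k) ρ ⊆ U) →
      Filter.Tendsto y Filter.atTop (nhds y₀) →
      Filter.Tendsto (fun k => Metric.infDist (x k, y k) (gphSet Φ))
        Filter.atTop (nhds 0) →
      (⨅ u ∈ {x | y₀ ∈ Φ x} ∩ U, φ u) ≤
        Filter.liminf (fun k => φ (x k)) Filter.atTop)
    -- x₀ is an ε-minimal point of φ restricted to Φ⁻¹(y₀) on U
    (hmin : φ x₀ - (ε : EReal) < ⨅ u ∈ {x | y₀ ∈ Φ x} ∩ U, φ u) :
    ∃ δ₀ : ℝ, 0 < δ₀ ∧ δ₀ < δ ∧ ∀ δ' : ℝ, δ₀ < δ' → δ' < δ → ∀ η : ℝ, 0 < η →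
      ∃ x₁ ∈ Metric.ball x₀ δ', ∃ y₁ ∈ Metric.ball y₀ η,
        Metric.infDist (x₁, y₁) (gphSet Φ) < η ∧
        ∃ γ : ℝ, 0 < γ ∧ ∃ γ₁ : ℝ, 0 < γ₁ ∧
          phiGamma φ Φ y₀ γ x₁ y₁ + (((γ₁ * (dist x₁ x₀) ^ 2) : ℝ) : EReal) ≤ φ x₀ ∧
          Filter.limsup
            (fun p : X × Y =>
              (phiGamma φ Φ y₀ γ x₁ y₁ - phiGamma φ Φ y₀ γ p.1 p.2) /
                ((dist p (x₁, y₁) : ℝ) : EReal))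
            (𝓝[≠] (x₁, y₁)) < ((2 * ε / δ : ℝ) : EReal) := by
  classical
  obtain ⟨c, hc⟩ := hbdd
  set D : X → ℝ := fun x => Metric.infDist (x, y₀) (gphSet Φ) with hDdef
  have hDnn : ∀ x, 0 ≤ D x := fun x => Metric.infDist_nonneg
  set r₀ : ℝ := (φ x₀).toReal with hr₀
  have hφx₀ : φ x₀ = ((r₀ : ℝ) : EReal) := (EReal.coe_toReal hdom (hbot x₀)).symm
  set R : ℝ := r₀ + 1 with hRdef
  set φR : X → ℝ := fun x => ((φ x) ⊓ ((R : ℝ) : EReal)).toReal with hφRdef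
  have htne_bot : ∀ x, φ x ⊓ ((R:ℝ):EReal) ≠ ⊥ :=
    fun x => (lt_min (Ne.bot_lt (hbot x)) (EReal.bot_lt_coe R)).ne'
  have htne_top : ∀ x, φ x ⊓ ((R:ℝ):EReal) ≠ ⊤ :=
    fun x => (lt_of_le_of_lt inf_le_right (EReal.coe_lt_top R)).ne
  have htrunc_eq : ∀ x, φR x < R → φ x = ((φR x : ℝ) : EReal) := by
    intro x hx
    rcases lt_or_ge (φ x) ((R:ℝ):EReal) with h | h
    · rw [hφRdef]
      simp only [min_eq_left h.le]
      exact (EReal.coe_toReal (h.trans (EReal.coe_lt_top R)).ne (hbot x)).symm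
    · exfalso
      have : φ x ⊓ ((R:ℝ):EReal) = ((R:ℝ):EReal) := min_eq_right h
      rw [hφRdef] at hx
      simp only [this, EReal.toReal_coe] at hx
      exact lt_irrefl _ hx
  have htrunc_le : ∀ x, φ x ≠ ⊤ → φR x ≤ (φ x).toReal :=
    fun x hx => EReal.toReal_le_toReal inf_le_left (htne_bot x) hx
  have htrunc_ge : ∀ x, x ∈ U → min c R ≤ φR x := by
    intro x hx
    have h1 : ((min c R : ℝ) : EReal) ≤ φ x ⊓ ((R:ℝ):EReal) :=
      le_min ((EReal.coe_le_coe_iff.2 (min_le_left c R)).trans (hc x hx))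
        (EReal.coe_le_coe_iff.2 (min_le_right c R))
    have := EReal.toReal_le_toReal h1 (by simp) (htne_top x)
    simpa using this
  have hφRx₀ : φR x₀ = r₀ := by
    rw [hφRdef]
    simp only [hφx₀]
    rw [min_eq_left (EReal.coe_le_coe_iff.2 (by rw [hRdef]; linarith))]
    simp
  have hφRlsc : LowerSemicontinuous φR := by
    intro x t ht
    have h1 : (t : EReal) < φ x ⊓ ((R:ℝ):EReal) := by
      rw [← EReal.coe_toReal (htne_top x) (htne_bot x)]
      exact_mod_cast ht
    have h2 : (t:EReal) < φ x := h1.trans_le inf_le_left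
    have h3 : (t:EReal) < ((R:ℝ):EReal) := h1.trans_le inf_le_right
    filter_upwards [hlsc x t h2] with w hw
    have h4 : (t:EReal) < φ w ⊓ ((R:ℝ):EReal) := lt_min hw h3
    show t < φR w
    rw [← EReal.coe_toReal (htne_top w) (htne_bot w)] at h4
    exact_mod_cast h4
  -- facts about m
  have hx₀mem : x₀ ∈ {x | y₀ ∈ Φ x} ∩ U := ⟨hfeas, hball (Metric.mem_ball_self hδ)⟩
  set m : EReal := ⨅ u ∈ {x | y₀ ∈ Φ x} ∩ U, φ u with hmdef
  have hmle : m ≤ φ x₀ := iInf₂_le x₀ hx₀mem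
  have hcm : ((c:ℝ):EReal) ≤ m := le_iInf₂ fun u hu => hc u hu.2
  have hmtop : m ≠ ⊤ := (hmle.trans_lt (hφx₀ ▸ EReal.coe_lt_top r₀)).ne
  have hmbot : m ≠ ⊥ := fun h => by simp [h] at hcm
  set mR : ℝ := m.toReal with hmRdef
  have hmRE : m = ((mR:ℝ):EReal) := (EReal.coe_toReal hmtop hmbot).symm
  have hmRr₀ : mR ≤ r₀ := by
    have := EReal.toReal_le_toReal hmle hmbot hdom
    simpa using this
  have hεmR : r₀ - ε < mR := by
    rw [hφx₀, hmRE, ← EReal.coe_sub] at hmin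
    exact EReal.coe_lt_coe_iff.1 hmin
  refine ⟨3*δ/4, by positivity, by linarith, ?_⟩
  intro δ' hδ'₁ hδ'₂ η hη
  set r : ℝ := (δ' + δ)/2 with hrdef
  have hr1 : δ' < r := by rw [hrdef]; linarith
  have hr2 : r < δ := by rw [hrdef]; linarith
  have hr0 : 0 < r := by rw [hrdef]; linarith
  have hrU : Metric.closedBall x₀ r ⊆ U := fun w hw =>
    hball (lt_of_le_of_lt (Metric.mem_closedBall.1 hw) hr2)
  -- the claim: a penalty constant γ₀
  have claim : ∃ γ₀ : ℝ, 0 < γ₀ ∧ ∀ x ∈ Metric.closedBall x₀ r,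
      mR - ε/4 ≤ φR x + γ₀ * D x := by
    by_contra hcon
    push_neg at hcon
    have hcon' : ∀ k : ℕ, ∃ x ∈ Metric.closedBall x₀ r,
        φR x + ((k:ℝ)+1) * D x < mR - ε/4 := fun k => hcon ((k:ℝ)+1) (by positivity)
    choose xs hxs1 hxs2 using hcon'
    have hDk : ∀ k : ℕ, D (xs k) ≤ (mR - ε/4 - min c R) / ((k:ℝ)+1) := by
      intro k
      rw [le_div_iff₀ (by positivity)]
      nlinarith only [hxs2 k, htrunc_ge (xs k) (hrU (hxs1 k)), hDnn (xs k)]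
    have htend : Filter.Tendsto (fun k : ℕ => (mR - ε/4 - min c R) / ((k:ℝ)+1))
        Filter.atTop (nhds 0) := by
      have h1 := tendsto_const_div_atTop_nhds_zero_nat (mR - ε/4 - min c R)
      have h2 := h1.comp (Filter.tendsto_add_atTop_nat 1)
      have he : (fun k : ℕ => (mR - ε/4 - min c R) / ((k:ℝ)+1)) =
          (fun n : ℕ => (mR - ε/4 - min c R) / (n:ℝ)) ∘ (fun a => a + 1) := by
        funext k
        simp only [Function.comp]
        push_cast
        ring
      rw [he]
      exact h2
    have hD0 : Filter.Tendsto (fun k => D (xs k)) Filter.atTop (nhds 0) :=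
      squeeze_zero (fun k => hDnn (xs k)) hDk htend
    have hrel' := hrel xs (fun _ => y₀) (δ - r) (by linarith)
      (fun k => by
        intro w hw
        apply hball
        have h1 := Metric.mem_closedBall.1 (hxs1 k)
        have h2 := Metric.mem_ball.1 hw
        rw [Metric.mem_ball]
        calc dist w x₀ ≤ dist w (xs k) + dist (xs k) x₀ := dist_triangle _ _ _
          _ < δ := by linarith)
      tendsto_const_nhds hD0
    have hφxs : ∀ k, φ (xs k) ≤ ((mR - ε/4 : ℝ) : EReal) := by
      intro k
      have h2 := hxs2 k
      have hnn := hDnn (xs k)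
      have hkpos : (0:ℝ) ≤ ((k:ℝ)+1) * D (xs k) := by positivity
      have hlt : φR (xs k) < R := by
        rw [hRdef]; nlinarith only [h2, hnn, hkpos, hmRr₀, hε]
      rw [htrunc_eq _ hlt]
      exact EReal.coe_le_coe_iff.2 (by nlinarith only [h2, hkpos])
    have hlim : Filter.liminf (fun k => φ (xs k)) Filter.atTop ≤ ((mR - ε/4:ℝ):EReal) :=
      Filter.liminf_le_of_frequently_le (Filter.Frequently.of_forall hφxs)
    have hfinal : m ≤ ((mR - ε/4:ℝ):EReal) := le_trans hrel' hlim
    rw [hmRE] at hfinal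
    have := EReal.coe_le_coe_iff.1 hfinal
    linarith
  obtain ⟨γ₀, hγ₀, hγ₀b⟩ := claim
  set lam : ℝ := 5*ε/(3*δ) with hlamdef
  have hlampos : 0 < lam := by rw [hlamdef]; positivity
  set γ₁ : ℝ := ε/(12*δ^2) with hγ₁def
  have hγ₁pos : 0 < γ₁ := by rw [hγ₁def]; positivity
  set K : ℝ := max 0 (r₀ - min c R) with hKdef
  have hK0 : 0 ≤ K := le_max_left _ _
  set γ : ℝ := γ₀ + (K + 1)/η with hγdef
  have hγpos : 0 < γ := by rw [hγdef]; positivity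
  have hγγ₀ : γ₀ ≤ γ := by
    rw [hγdef]
    have : 0 ≤ (K+1)/η := by positivity
    linarith
  set F : X → ℝ := fun x => φR x + (γ * D x + γ₁ * dist x x₀^2) with hFdef
  have hFlsc : LowerSemicontinuous F := by
    apply hφRlsc.add
    apply Continuous.lowerSemicontinuous
    apply Continuous.add
    · exact continuous_const.mul ((Metric.continuous_infDist_pt _).comp
        (continuous_id.prodMk continuous_const))
    · exact continuous_const.mul ((continuous_id.dist continuous_const).pow 2)
  have hx₀cb : x₀ ∈ Metric.closedBall x₀ r := Metric.mem_closedBall_self hr0.le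
  haveI : CompleteSpace (Metric.closedBall x₀ r) :=
    (Metric.isClosed_closedBall).completeSpace_coe
  obtain ⟨zz, hE1, hE2'⟩ := ekeland_aux (α := Metric.closedBall x₀ r)
    (fun p => F p.1)
    (fun p t ht => (continuous_subtype_val.tendsto p).eventually (hFlsc p.1 t ht))
    (min c R)
    (fun p => by
      have h1 := htrunc_ge p.1 (hrU p.2)
      have h2 := hDnn p.1
      have h3 : (0:ℝ) ≤ γ₁ * dist p.1 x₀^2 := by positivity
      have h4 : (0:ℝ) ≤ γ * D p.1 := by positivity
      simp only [hFdef]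
      linarith)
    ⟨x₀, hx₀cb⟩ lam hlampos
  set xh : X := zz.1 with hxhdef
  have hxhcb : xh ∈ Metric.closedBall x₀ r := zz.2
  clear_value xh F γ K γ₁ lam mR φR R r₀ D
  have hE1' : F xh + lam * dist xh x₀ ≤ F x₀ := by
    simpa [Subtype.dist_eq, ← hxhdef] using hE1
  have hE2 : ∀ x ∈ Metric.closedBall x₀ r, F xh ≤ F x + lam * dist x xh := by
    intro x hx
    have := hE2' ⟨x, hx⟩
    simpa [Subtype.dist_eq, ← hxhdef] using this
  have hD0' : D x₀ = 0 := by
    rw [hDdef]; exact Metric.infDist_zero_of_mem hfeas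
  have hFx₀ : F x₀ = r₀ := by
    simp only [hFdef, hφRx₀, hD0', dist_self]
    ring
  have hE1e : φR xh + γ * D xh + γ₁ * dist xh x₀^2 + lam * dist xh x₀ ≤ r₀ := by
    rw [hFx₀] at hE1'
    simp only [hFdef] at hE1'
    linarith only [hE1']
  have hFxhlb : mR - ε/4 ≤ φR xh + γ * D xh := by
    have h1 := hγ₀b xh hxhcb
    have h2 : γ₀ * D xh ≤ γ * D xh := mul_le_mul_of_nonneg_right hγγ₀ (hDnn xh)
    exact h1.trans (add_le_add_right h2 _)
  have hdxh : dist xh x₀ < 3*δ/4 := by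
    have h1 : lam * dist xh x₀ ≤ r₀ - (mR - ε/4) := by
      have hq : 0 ≤ γ₁ * dist xh x₀^2 := mul_nonneg hγ₁pos.le (sq_nonneg _)
      linarith only [hq, hE1e, hFxhlb]
    have h2 : lam * dist xh x₀ < 5*ε/4 := by linarith only [h1, hεmR]
    by_contra hcontra
    push_neg at hcontra
    have h3 : lam * (3*δ/4) ≤ lam * dist xh x₀ :=
      mul_le_mul_of_nonneg_left hcontra hlampos.le
    have h4 : lam * (3*δ/4) = 5*ε/4 := by
      rw [hlamdef]; field_simp
    linarith only [h2, h3, h4]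
  have hdxh' : dist xh x₀ < δ' := lt_trans hdxh hδ'₁
  have hDxh : D xh < η := by
    have h1 : γ * D xh ≤ r₀ - min c R := by
      have ha := htrunc_ge xh (hrU hxhcb)
      have hq : 0 ≤ γ₁ * dist xh x₀^2 := mul_nonneg hγ₁pos.le (sq_nonneg _)
      have hl : 0 ≤ lam * dist xh x₀ := mul_nonneg hlampos.le dist_nonneg
      linarith only [ha, hq, hl, hE1e, hFxhlb]
    have h2 : γ * D xh ≤ K := le_trans h1 (by rw [hKdef]; exact le_max_right _ _)
    have h3 : K + 1 ≤ γ * η := by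
      rw [hγdef, add_mul, div_mul_cancel₀ _ (ne_of_gt hη)]
      have h4 := mul_pos hγ₀ hη
      linarith only [h4]
    by_contra hcontra
    push_neg at hcontra
    have : γ * η ≤ γ * D xh := mul_le_mul_of_nonneg_left hcontra hγpos.le
    linarith only [h2, h3, this]
  have hφRxh_lt : φR xh < R := by
    rw [hRdef]
    have hd := mul_nonneg hγpos.le (hDnn xh)
    have hq : 0 ≤ γ₁ * dist xh x₀^2 := mul_nonneg hγ₁pos.le (sq_nonneg _)
    have hl : 0 ≤ lam * dist xh x₀ := mul_nonneg hlampos.le dist_nonneg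
    linarith only [hd, hq, hl, hE1e]
  have hφxh : φ xh = ((φR xh : ℝ) : EReal) := htrunc_eq _ hφRxh_lt
  refine ⟨xh, Metric.mem_ball.2 hdxh', y₀, Metric.mem_ball_self hη,
    (by simp only [hDdef] at hDxh; exact hDxh), γ, hγpos,
    γ₁, hγ₁pos, ?_, ?_⟩
  · -- the value inequality
    rw [hφx₀]
    simp only [phiGamma]
    rw [hφxh, ← EReal.coe_add, ← EReal.coe_add]
    apply EReal.coe_le_coe_iff.2
    simp only [dist_self, zero_add]
    have hthis : (Metric.infDist (xh, y₀) (gphSet Φ)) = D xh := by rw [hDdef]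
    rw [hthis]
    have hl : 0 ≤ lam * dist xh x₀ := mul_nonneg hlampos.le dist_nonneg
    linarith only [hE1e, hl]
  · -- the limsup inequality
    set B : ℝ := lam + 2*δ*γ₁ with hBdef
    have hBnn : 0 ≤ B := by rw [hBdef]; positivity
    have hBlt : B < 2*ε/δ := by
      rw [hBdef, hlamdef, hγ₁def]
      have h1 : 2*δ*(ε/(12*δ^2)) = ε/(6*δ) := by field_simp; ring
      have h3 : 5*ε/(3*δ) + ε/(6*δ) = 11*ε/(6*δ) := by field_simp; ring
      rw [h1, h3, div_lt_div_iff₀ (by linarith : (0:ℝ) < 6*δ) hδ]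
      nlinarith only [mul_pos hε hδ, hε, hδ]
    have hA : phiGamma φ Φ y₀ γ xh y₀ =
        (((φR xh + γ * (dist y₀ y₀ + Metric.infDist (xh, y₀) (gphSet Φ))) : ℝ) : EReal) := by
      simp only [phiGamma]
      rw [hφxh, ← EReal.coe_add]
    apply lt_of_le_of_lt ?_ (EReal.coe_lt_coe_iff.2 hBlt)
    refine Filter.limsup_le_of_le Filter.isCobounded_le_of_bot ?_
    have hnbhd : ∀ᶠ p : X × Y in 𝓝 (xh, y₀), dist p.1 x₀ < r := by
      have hopen : IsOpen {p : X × Y | dist p.1 x₀ < r} :=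
        isOpen_lt (continuous_fst.dist continuous_const) continuous_const
      exact hopen.mem_nhds (lt_trans hdxh' hr1)
    filter_upwards [nhdsWithin_le_nhds hnbhd, self_mem_nhdsWithin] with p hp1 hp2
    have hpne : p ≠ (xh, y₀) := hp2
    have hdp : 0 < dist p (xh, y₀) := dist_pos.2 hpne
    obtain ⟨x, y⟩ := p
    simp only at hp1
    rcases eq_or_ne (φ x) ⊤ with hx | hx
    · have h1 : phiGamma φ Φ y₀ γ x y = ⊤ := by
        simp only [phiGamma]
        rw [hx]; exact EReal.top_add_coe _
      rw [h1, hA, EReal.sub_top]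
      rw [EReal.bot_div_of_pos_ne_top (by exact_mod_cast hdp) (EReal.coe_ne_top _)]
      exact bot_le
    · have hφxR : φ x = (((φ x).toReal : ℝ) : EReal) := (EReal.coe_toReal hx (hbot x)).symm
      have hPG : phiGamma φ Φ y₀ γ x y =
          ((((φ x).toReal + γ * (dist y y₀ + Metric.infDist (x, y) (gphSet Φ))) : ℝ) : EReal) := by
        simp only [phiGamma]
        rw [EReal.coe_add, ← hφxR]
      rw [hA, hPG, ← EReal.coe_sub, ← EReal.coe_div]
      apply EReal.coe_le_coe_iff.2
      rw [div_le_iff₀ hdp]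
      -- real arithmetic
      have l1 : φR x ≤ (φ x).toReal := htrunc_le x hx
      have l2 : D x ≤ Metric.infDist (x, y) (gphSet Φ) + dist y y₀ := by
        rw [hDdef]
        have h := Metric.infDist_le_infDist_add_dist
          (x := ((x, y₀) : X × Y)) (y := (x, y)) (s := gphSet Φ)
        have hd : dist ((x, y₀) : X × Y) (x, y) = dist y y₀ := by
          rw [Prod.dist_eq]
          simp [dist_comm, dist_nonneg]
        rw [hd] at h
        exact h
      have l3 := hE2 x (Metric.mem_closedBall.2 hp1.le)
      simp only [hFdef] at l3
      have l4 : dist x xh ≤ dist ((x, y) : X × Y) (xh, y₀) := by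
        rw [Prod.dist_eq]; exact le_max_left _ _
      have l5 : dist x x₀ - dist xh x₀ ≤ dist x xh :=
        (abs_le.1 (abs_dist_sub_le x xh x₀)).2
      have l6 : dist x x₀ ≤ δ := le_trans hp1.le hr2.le
      have l7 : dist xh x₀ ≤ δ := le_trans (Metric.mem_closedBall.1 hxhcb) hr2.le
      have l8 : 0 ≤ dist x xh := dist_nonneg
      have l9 : 0 ≤ dist x x₀ := dist_nonneg
      have l10 : 0 ≤ dist xh x₀ := dist_nonneg
      have lquad : γ₁ * dist x x₀^2 - γ₁ * dist xh x₀^2 ≤ 2*δ*γ₁ * dist x xh := by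
        nlinarith only [mul_le_mul_of_nonneg_left l5
          (by positivity : (0:ℝ) ≤ γ₁ * (dist x x₀ + dist xh x₀)),
          mul_le_mul_of_nonneg_right (by linarith only [l6, l7] : dist x x₀ + dist xh x₀ ≤ 2*δ)
          (by positivity : (0:ℝ) ≤ γ₁ * dist x xh), l8, l9, l10, hγ₁pos]
      have lmain : φR xh + γ * (dist y₀ y₀ + D xh)
          - ((φ x).toReal + γ * (dist y y₀ + Metric.infDist (x, y) (gphSet Φ)))
          ≤ B * dist ((x, y) : X × Y) (xh, y₀) := by
        have m1 : γ * D x ≤ γ * (dist y y₀ + Metric.infDist (x, y) (gphSet Φ)) := by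
          apply mul_le_mul_of_nonneg_left _ hγpos.le
          linarith only [l2]
        have m2 : lam * dist x xh ≤ lam * dist ((x, y) : X × Y) (xh, y₀) :=
          mul_le_mul_of_nonneg_left l4 hlampos.le
        have m3 : 2*δ*γ₁ * dist x xh ≤ 2*δ*γ₁ * dist ((x, y) : X × Y) (xh, y₀) :=
          mul_le_mul_of_nonneg_left l4 (by positivity)
        simp only [dist_self, zero_add]
        rw [hBdef]
        have hDeq2 : Metric.infDist (x, y₀) (gphSet Φ) = D x := by rw [hDdef]
        linarith only [l1, m1, m2, m3, lquad, l3]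
      have hDeq : Metric.infDist (xh, y₀) (gphSet Φ) = D xh := by rw [hDdef]
      rw [hDeq]
      exact lmain
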